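/- Let P : ℝ^m → [0, ∞] be a nonnegative proper closed function, μ > 0, A : ℝ^n → ℝ^m a linear map with adjoint A^*, and define D_{μ,P}(u) := sup_{y ∈ dom P} { (1/μ)⟨u, y⟩ − (1/(2μ))‖y‖² − P(y) }. For any x ∈ ℝ^n and any y* ∈ prox_{μP}(Ax), the vector (1/μ) A^* y* is a subgradient (in the sense of convex analysis) of the convex function x ↦ D_{μ,P}(Ax) at x, i.e., D_{μ,P}(Av) − D_{μ,P}(Ax) ≥ (1/μ)⟨A^* y*, v − x⟩ for all v ∈ ℝ^n. -/

import Mathlib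

open Filter Topology

/-- The proximal mapping of `μ P` at `u`. -/
def proxSet {d : ℕ} (h : EuclideanSpace ℝ (Fin d) → EReal) (lam : ℝ)
    (x : EuclideanSpace ℝ (Fin d)) : Set (EuclideanSpace ℝ (Fin d)) :=
  {z | ∀ y, (((1 / (2 * lam)) * ‖x - z‖ ^ 2 : ℝ) : EReal) + h z ≤
      (((1 / (2 * lam)) * ‖x - y‖ ^ 2 : ℝ) : EReal) + h y}

/-- `D_{μ,P}(u) := sup_{y ∈ dom P} { (1/μ)⟨u, y⟩ − (1/(2μ))‖y‖² − P(y) }`. -/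
noncomputable def Dfun {m : ℕ} (P : EuclideanSpace ℝ (Fin m) → EReal) (μ : ℝ)
    (u : EuclideanSpace ℝ (Fin m)) : EReal :=
  ⨆ y, ⨆ (_ : P y ≠ ⊤),
    (((1 / μ) * (inner ℝ u y : ℝ) - (1 / (2 * μ)) * ‖y‖ ^ 2 : ℝ) : EReal) - P y

/-- Let `P : ℝ^m → [0, ∞]` be a nonnegative proper closed function, `μ > 0`,
`A : ℝ^n → ℝ^m` linear with adjoint `A^*`.  For any `x ∈ ℝ^n` and any
`y* ∈ prox_{μP}(Ax)`, the vector `(1/μ) A^* y*` is a convex-analysis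
subgradient of `x ↦ D_{μ,P}(Ax)` at `x`, i.e.
`D_{μ,P}(Av) − D_{μ,P}(Ax) ≥ (1/μ)⟨A^* y*, v − x⟩` for all `v`. -/
theorem prox_subgradient_of_Dfun_comp {n m : ℕ}
    (P : EuclideanSpace ℝ (Fin m) → EReal)
    (hnn : ∀ y, 0 ≤ P y) (hproper : ∃ y, P y ≠ ⊤)
    (hclosed : LowerSemicontinuous P) (μ : ℝ) (hμ : 0 < μ)
    (A : EuclideanSpace ℝ (Fin n) →L[ℝ] EuclideanSpace ℝ (Fin m))
    (x : EuclideanSpace ℝ (Fin n)) (ystar : EuclideanSpace ℝ (Fin m))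
    (hystar : ystar ∈ proxSet P μ (A x)) :
    ∀ v, (((1 / μ) * (inner ℝ (ContinuousLinearMap.adjoint A ystar) (v - x) : ℝ) : ℝ) : EReal) ≤
      Dfun P μ (A v) - Dfun P μ (A x) := by
  intro v
  have hne_bot : ∀ y, P y ≠ ⊥ := fun y h => by
    have := hnn y; rw [h] at this; exact absurd this (by simp)
  -- `P ystar` is finite
  obtain ⟨y0, hy0⟩ := hproper
  have hPys_ne_top : P ystar ≠ ⊤ := by
    intro htop
    have h := hystar y0
    rw [htop, EReal.coe_add_top] at h
    have hRns : (((1 / (2 * μ)) * ‖A x - y0‖ ^ 2 : ℝ) : EReal) + P y0 ≠ ⊤ := by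
      rw [← EReal.coe_toReal hy0 (hne_bot y0), ← EReal.coe_add]
      exact EReal.coe_ne_top _
    exact hRns (top_le_iff.mp h)
  set r : ℝ := (P ystar).toReal with hrdef
  have hr : P ystar = (r : EReal) := (EReal.coe_toReal hPys_ne_top (hne_bot ystar)).symm
  set b : ℝ := (1 / μ) * (inner ℝ (A x) ystar : ℝ) - (1 / (2 * μ)) * ‖ystar‖ ^ 2 - r with hbdef
  have hμ2 : (0:ℝ) < 2 * μ := by linarith
  -- key inequality from prox property
  have key : ∀ y, P y ≠ ⊤ →
      (((1 / μ) * (inner ℝ (A x) y : ℝ) - (1 / (2 * μ)) * ‖y‖ ^ 2 : ℝ) : EReal) - P y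
        ≤ (b : EReal) := by
    intro y hy
    set s : ℝ := (P y).toReal with hsdef
    have hs : P y = (s : EReal) := (EReal.coe_toReal hy (hne_bot y)).symm
    have h := hystar y
    rw [hs, hr, ← EReal.coe_add, ← EReal.coe_add, EReal.coe_le_coe_iff] at h
    rw [hs, ← EReal.coe_sub, EReal.coe_le_coe_iff]
    have e1 : ‖A x - y‖ ^ 2 = ‖A x‖ ^ 2 - 2 * (inner ℝ (A x) y : ℝ) + ‖y‖ ^ 2 :=
      norm_sub_sq_real _ _
    have e2 : ‖A x - ystar‖ ^ 2 = ‖A x‖ ^ 2 - 2 * (inner ℝ (A x) ystar : ℝ) + ‖ystar‖ ^ 2 :=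
      norm_sub_sq_real _ _
    rw [e1, e2] at h
    have h2 : (1:ℝ) / μ = 2 * (1 / (2 * μ)) := by field_simp
    rw [hbdef, h2]
    nlinarith [h]
  -- value of Dfun at A x
  have hDx : Dfun P μ (A x) = (b : EReal) := by
    apply le_antisymm
    · exact iSup₂_le key
    · refine le_iSup₂_of_le ystar hPys_ne_top ?_
      rw [hr, ← EReal.coe_sub]
  -- lower bound on Dfun at A v
  have hDv : (((1 / μ) * (inner ℝ (A v) ystar : ℝ) - (1 / (2 * μ)) * ‖ystar‖ ^ 2 - r : ℝ) : EReal)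
      ≤ Dfun P μ (A v) := by
    refine le_iSup₂_of_le ystar hPys_ne_top ?_
    rw [hr, ← EReal.coe_sub]
  rw [hDx]
  have hinner : (inner ℝ (ContinuousLinearMap.adjoint A ystar) (v - x) : ℝ)
      = (inner ℝ (A v) ystar : ℝ) - (inner ℝ (A x) ystar : ℝ) := by
    rw [ContinuousLinearMap.adjoint_inner_left, map_sub, inner_sub_right,
      real_inner_comm ystar (A v), real_inner_comm ystar (A x)]
  have heq : (1 / μ) * (inner ℝ (ContinuousLinearMap.adjoint A ystar) (v - x) : ℝ)
      = ((1 / μ) * (inner ℝ (A v) ystar : ℝ) - (1 / (2 * μ)) * ‖ystar‖ ^ 2 - r) - b := by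
    rw [hinner, hbdef]; ring
  rw [heq, EReal.coe_sub]
  exact EReal.sub_le_sub hDv le_rfl
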